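/- arXiv:2304.05710 — 2 statements merged into one kernel-verified Lean document; each statement's English description precedes it below -/
import Mathlib

section
/- Consider the block matrix A = [[0, I, 0], [-M⁻¹(L+Θ), -M⁻¹H, M⁻¹Φ], [0, -(κ_D/τ)I, -(1/τ)I]] where L is the Laplacian of an undirected connected graph, M, H, Θ, Φ are diagonal with positive diagonals, and κ_D, τ > 0. Then A is Hurwitz: every eigenvalue of A has strictly negative real part. -/
open Matrix

/-- A 3×3 block matrix with `N × N` blocks. -/
def blk3 {N : ℕ} (A11 A12 A13 A21 A22 A23 A31 A32 A33 : Matrix (Fin N) (Fin N) ℝ) :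
    Matrix (Fin N ⊕ (Fin N ⊕ Fin N)) (Fin N ⊕ (Fin N ⊕ Fin N)) ℝ :=
  Matrix.of fun i j =>
    match i, j with
    | .inl i, .inl j => A11 i j
    | .inl i, .inr (.inl j) => A12 i j
    | .inl i, .inr (.inr j) => A13 i j
    | .inr (.inl i), .inl j => A21 i j
    | .inr (.inl i), .inr (.inl j) => A22 i j
    | .inr (.inl i), .inr (.inr j) => A23 i j
    | .inr (.inr i), .inl j => A31 i j
    | .inr (.inr i), .inr (.inl j) => A32 i j
    | .inr (.inr i), .inr (.inr j) => A33 i j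

private lemma spectrum_exists_eigenvector {n : Type*} [Fintype n] [DecidableEq n]
    (B : Matrix n n ℂ) (μ : ℂ) (hμ : μ ∈ spectrum ℂ B) :
    ∃ v ≠ 0, B.mulVec v = μ • v := by
  rw [spectrum.mem_iff] at hμ
  have hdet : (algebraMap ℂ (Matrix n n ℂ) μ - B).det = 0 := by
    by_contra hd
    exact hμ ((Matrix.isUnit_iff_isUnit_det _).2 (isUnit_iff_ne_zero.2 hd))
  obtain ⟨v, hv0, hv⟩ := (Matrix.exists_mulVec_eq_zero_iff).2 hdet
  refine ⟨v, hv0, ?_⟩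
  have h2 : (algebraMap ℂ (Matrix n n ℂ) μ - B).mulVec v = μ • v - B.mulVec v := by
    rw [Matrix.sub_mulVec]
    congr 1
    ext k
    simp [Matrix.mulVec, dotProduct, Matrix.algebraMap_matrix_apply, ite_mul]
  rw [hv] at h2
  exact (sub_eq_zero.mp h2.symm).symm

/-- Laplacian quadratic form identity over ℂ. -/
private lemma lap_quad {N : ℕ} (a : Matrix (Fin N) (Fin N) ℝ)
    (hs : ∀ i j, a i j = a j i) (hd : ∀ i, a i i = 0)
    (L : Matrix (Fin N) (Fin N) ℝ)
    (hL : L = Matrix.of fun i j => if i = j then ∑ k, a i k else -(a i j))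
    (x : Fin N → ℂ) :
    (2 : ℂ) * ∑ i, ∑ j, (starRingEnd ℂ) (x i) * (L i j : ℂ) * x j
      = ∑ i, ∑ j, (a i j : ℂ) * ((starRingEnd ℂ) (x i - x j) * (x i - x j)) := by
  have hLij : ∀ i j, (L i j : ℂ) = (if i = j then (∑ k, (a i k : ℂ)) else 0) - (a i j : ℂ) := by
    intro i j
    by_cases hij : i = j
    · subst hij; simp [hL, hd i]
    · push_cast [hL, hij]; simp [hij]
  -- abbreviations
  set c : Fin N → ℂ := fun i => (starRingEnd ℂ) (x i) with hc
  have hswap1 : ∑ i, ∑ j, (a i j : ℂ) * (c j * x j) = ∑ i, ∑ j, (a i j : ℂ) * (c i * x i) := by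
    rw [Finset.sum_comm]
    refine Finset.sum_congr rfl fun i _ => Finset.sum_congr rfl fun j _ => by rw [hs j i]
  have hswap2 : ∑ i, ∑ j, (a i j : ℂ) * (c j * x i) = ∑ i, ∑ j, (a i j : ℂ) * (c i * x j) := by
    rw [Finset.sum_comm]
    refine Finset.sum_congr rfl fun i _ => Finset.sum_congr rfl fun j _ => by rw [hs j i]
  have hlhs : ∑ i, ∑ j, c i * (L i j : ℂ) * x j
      = ∑ i, ∑ j, ((a i j : ℂ) * (c i * x i) - (a i j : ℂ) * (c i * x j)) := by
    refine Finset.sum_congr rfl fun i _ => ?_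
    rw [Finset.sum_sub_distrib]
    have h1 : ∑ j, c i * (L i j : ℂ) * x j
        = ∑ j, (c i * ((if i = j then (∑ k, (a i k : ℂ)) else 0) * x j)
            - (a i j : ℂ) * (c i * x j)) := by
      refine Finset.sum_congr rfl fun j _ => by rw [hLij i j]; ring
    rw [h1, Finset.sum_sub_distrib]
    congr 1
    simp [mul_ite, ite_mul, Finset.mul_sum, Finset.sum_ite_eq, mul_comm, mul_left_comm, mul_assoc]
  have hrhs : ∑ i, ∑ j, (a i j : ℂ) * (c (i) * x i - c i * x j - c j * x i + c j * x j)
      = ∑ i, ∑ j, (a i j : ℂ) * ((starRingEnd ℂ) (x i - x j) * (x i - x j)) := by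
    refine Finset.sum_congr rfl fun i _ => Finset.sum_congr rfl fun j _ => ?_
    simp only [map_sub, hc]
    ring
  rw [← hrhs]
  simp only [mul_sub, mul_add, Finset.sum_sub_distrib, Finset.sum_add_distrib]
  rw [hswap1, hswap2]
  rw [show (∑ i, ∑ j, c i * (L i j : ℂ) * x j) =
    ∑ i, ∑ j, ((a i j : ℂ) * (c i * x i) - (a i j : ℂ) * (c i * x j)) from hlhs]
  simp only [Finset.sum_sub_distrib]
  ring

/-- The closed-loop matrix
`A = [[0, I, 0], [-M⁻¹(L+Θ), -M⁻¹H, M⁻¹Φ], [0, -(κ_D/τ)I, -(1/τ)I]]` built from the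
Laplacian `L` of a connected undirected graph and positive diagonal `M, H, Θ, Φ`,
`κ_D, τ > 0`, is Hurwitz: every complex eigenvalue has strictly negative real part. -/
theorem stmt3 {N : ℕ} (a : Matrix (Fin N) (Fin N) ℝ)
    (ha_symm : ∀ i j, a i j = a j i) (ha_nonneg : ∀ i j, 0 ≤ a i j)
    (ha_diag : ∀ i, a i i = 0)
    (ha_conn : ∀ i j : Fin N, Relation.ReflTransGen (fun u v => a u v ≠ 0) i j)
    (L : Matrix (Fin N) (Fin N) ℝ)
    (hL : L = Matrix.of fun i j => if i = j then ∑ k, a i k else -(a i j))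
    (θ m h φ : Fin N → ℝ)
    (hθ : ∀ i, 0 < θ i) (hm : ∀ i, 0 < m i) (hh : ∀ i, 0 < h i) (hφ : ∀ i, 0 < φ i)
    (κ τ : ℝ) (hκ : 0 < κ) (hτ : 0 < τ)
    (A : Matrix (Fin N ⊕ (Fin N ⊕ Fin N)) (Fin N ⊕ (Fin N ⊕ Fin N)) ℝ)
    (hA : A = blk3 0 1 0
      (-(Matrix.diagonal (fun i => (m i)⁻¹) * (L + Matrix.diagonal θ)))
      (-(Matrix.diagonal (fun i => (m i)⁻¹) * Matrix.diagonal h))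
      (Matrix.diagonal (fun i => (m i)⁻¹) * Matrix.diagonal φ)
      0 (-((κ / τ) • (1 : Matrix (Fin N) (Fin N) ℝ)))
      (-(τ⁻¹ • (1 : Matrix (Fin N) (Fin N) ℝ)))) :
    ∀ μ ∈ spectrum ℂ (A.map (Complex.ofReal ·)), μ.re < 0 := by
  intro μ hμ
  by_contra hcon
  push_neg at hcon
  obtain ⟨v, hv0, hv⟩ := spectrum_exists_eigenvector _ μ hμ
  have hv' : ∀ k, (A.map (Complex.ofReal ·)).mulVec v k = μ * v k := fun k => congrFun hv k
  set x : Fin N → ℂ := fun i => v (.inl i) with hx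
  set y : Fin N → ℂ := fun i => v (.inr (.inl i)) with hy
  set z : Fin N → ℂ := fun i => v (.inr (.inr i)) with hz
  have hx' : ∀ i, v (Sum.inl i) = x i := fun _ => rfl
  have hy' : ∀ i, v (Sum.inr (Sum.inl i)) = y i := fun _ => rfl
  have hz' : ∀ i, v (Sum.inr (Sum.inr i)) = z i := fun _ => rfl
  -- the three block equations
  have e1 : ∀ i, y i = μ * x i := by
    intro i
    have := hv' (Sum.inl i)
    simp [hA, blk3, Matrix.mulVec, dotProduct, Fintype.sum_sum_type,
      Matrix.one_apply, apply_ite (Complex.ofReal ·),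
      ite_mul, Finset.sum_ite_eq, Finset.sum_ite_eq'] at this
    exact this
  have e2 : ∀ i, (↑(m i) : ℂ) * (μ * y i) + ↑(h i) * y i + ↑(θ i) * x i
      + (∑ j, (↑(L i j) : ℂ) * x j) = ↑(φ i) * z i := by
    intro i
    have hmi : ((m i : ℝ) : ℂ) ≠ 0 := by
      exact_mod_cast (hm i).ne'
    have h0 := hv' (Sum.inr (Sum.inl i))
    simp only [hA, blk3, Matrix.mulVec, dotProduct, Matrix.of_apply,
      Fintype.sum_sum_type, Matrix.map_apply, Matrix.neg_apply,
      Matrix.diagonal_mul, Matrix.add_apply, Matrix.diagonal_apply,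
      Matrix.diagonal_mul_diagonal, Matrix.smul_apply, Matrix.one_apply,
      smul_eq_mul, mul_ite, mul_one, mul_zero, Complex.ofReal_neg, Complex.ofReal_mul,
      Complex.ofReal_add, Complex.ofReal_zero, Complex.ofReal_inv,
      apply_ite (Complex.ofReal ·), hx', hy', hz'] at h0
    have eterm : ∀ j, -((↑(m i))⁻¹ * ((↑(L i j) : ℂ) + if i = j then (↑(θ i) : ℂ) else 0)) * x j
        = -((↑(m i))⁻¹ * ((↑(L i j) : ℂ) * x j))
          + (if i = j then -((↑(m i))⁻¹ * (↑(θ i) : ℂ) * x j) else 0) := by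
      intro j
      by_cases hij : i = j
      · simp only [if_pos hij]; ring
      · simp only [if_neg hij]; ring
    rw [Finset.sum_congr rfl fun j _ => eterm j] at h0
    simp only [Finset.sum_add_distrib, Finset.sum_ite_eq, Finset.mem_univ, if_true,
      Finset.sum_neg_distrib, ← Finset.mul_sum, ite_mul, neg_mul, zero_mul, neg_zero] at h0
    field_simp at h0
    refine mul_left_cancel₀ hmi ?_
    linear_combination -(↑(m i) : ℂ) * h0
  have e3 : ∀ i, (μ + (↑τ)⁻¹) * z i = -(↑κ / ↑τ) * y i := by
    intro i
    have h0 := hv' (Sum.inr (Sum.inr i))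
    simp only [hA, blk3, Matrix.mulVec, dotProduct, Matrix.of_apply,
      Fintype.sum_sum_type, Matrix.map_apply, Matrix.neg_apply,
      Matrix.smul_apply, Matrix.one_apply, Matrix.zero_apply,
      smul_eq_mul, mul_ite, mul_one, mul_zero, Complex.ofReal_neg, Complex.ofReal_mul,
      Complex.ofReal_zero, Complex.ofReal_inv, Complex.ofReal_div,
      apply_ite (Complex.ofReal ·), hx', hy', hz', ite_mul, neg_mul, zero_mul,
      Finset.sum_add_distrib, Finset.sum_neg_distrib, Finset.sum_ite_eq,
      Finset.mem_univ, if_true, Finset.sum_const_zero, zero_add, add_zero] at h0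
    linear_combination -h0
  have hτi : (0:ℝ) < τ⁻¹ := inv_pos.2 hτ
  have hdre : (μ + (↑τ)⁻¹ : ℂ).re = μ.re + τ⁻¹ := by
    simp [Complex.add_re, ← Complex.ofReal_inv]
  have hdne : (μ + (↑τ)⁻¹ : ℂ) ≠ 0 := by
    intro hd
    rw [hd] at hdre
    simp at hdre
    linarith
  set c : ℂ := -(↑κ / ↑τ) * (μ + (↑τ)⁻¹)⁻¹ with hcdef
  have hcz : ∀ i, z i = c * y i := by
    intro i
    have h1 : z i = (μ + (↑τ)⁻¹)⁻¹ * ((μ + (↑τ)⁻¹) * z i) := by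
      rw [← mul_assoc, inv_mul_cancel₀ hdne, one_mul]
    rw [h1, e3 i, hcdef]; ring
  have hcre : c.re ≤ 0 := by
    have h1 : c = (↑(-(κ/τ)) : ℂ) * (μ + (↑τ)⁻¹)⁻¹ := by rw [hcdef]; push_cast; ring
    have h2 : c.re = (-(κ/τ)) * ((μ + (↑τ)⁻¹)⁻¹).re := by
      rw [h1]; simp [Complex.mul_re]
    have h3 : 0 ≤ ((μ + (↑τ)⁻¹)⁻¹).re := by
      rw [Complex.inv_re]
      apply div_nonneg _ (Complex.normSq_nonneg _)
      rw [hdre]; linarith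
    rw [h2]
    have h4 : -(κ/τ) ≤ 0 := by
      have := div_pos hκ hτ; linarith
    nlinarith
  set R : ℝ := ∑ i, m i * Complex.normSq (y i) with hR
  set Sh : ℝ := ∑ i, h i * Complex.normSq (y i) with hSh
  set P : ℝ := ∑ i, φ i * Complex.normSq (y i) with hP
  set Q0 : ℝ := ∑ i, θ i * Complex.normSq (x i) with hQ0
  set QL : ℝ := (∑ i, ∑ j, a i j * Complex.normSq (x i - x j)) / 2 with hQL
  have hR0 : 0 ≤ R := Finset.sum_nonneg fun i _ => mul_nonneg (hm i).le (Complex.normSq_nonneg _)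
  have hSh0' : 0 ≤ Sh := Finset.sum_nonneg fun i _ => mul_nonneg (hh i).le (Complex.normSq_nonneg _)
  have hP0 : 0 ≤ P := Finset.sum_nonneg fun i _ => mul_nonneg (hφ i).le (Complex.normSq_nonneg _)
  have hQ00 : 0 ≤ Q0 := Finset.sum_nonneg fun i _ => mul_nonneg (hθ i).le (Complex.normSq_nonneg _)
  have hQL0 : 0 ≤ QL := by
    apply div_nonneg _ (by norm_num)
    exact Finset.sum_nonneg fun i _ => Finset.sum_nonneg fun j _ =>
      mul_nonneg (ha_nonneg i j) (Complex.normSq_nonneg _)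
  -- Laplacian quadratic form
  have hΛ : ∑ i, ∑ j, (starRingEnd ℂ) (x i) * ((L i j : ℝ) : ℂ) * x j = (QL : ℂ) := by
    have hq := lap_quad a ha_symm ha_diag L hL x
    have hRHS : ∑ i, ∑ j, ((a i j : ℝ) : ℂ) * ((starRingEnd ℂ) (x i - x j) * (x i - x j))
        = ((∑ i, ∑ j, a i j * Complex.normSq (x i - x j) : ℝ) : ℂ) := by
      simp only [← Complex.normSq_eq_conj_mul_self, ← Complex.ofReal_mul]
      norm_cast
    rw [hRHS] at hq
    rw [hQL]
    push_cast at hq ⊢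
    linear_combination hq / 2
  -- cast identities
  have hRc : ((R : ℝ) : ℂ) = ∑ i, ((m i : ℝ) : ℂ) * ((starRingEnd ℂ) (y i) * y i) := by
    rw [hR]; push_cast [Complex.normSq_eq_conj_mul_self]; simp [mul_assoc]
  have hShc : ((Sh : ℝ) : ℂ) = ∑ i, ((h i : ℝ) : ℂ) * ((starRingEnd ℂ) (y i) * y i) := by
    rw [hSh]; push_cast [Complex.normSq_eq_conj_mul_self]; simp [mul_assoc]
  have hPc : ((P : ℝ) : ℂ) = ∑ i, ((φ i : ℝ) : ℂ) * ((starRingEnd ℂ) (y i) * y i) := by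
    rw [hP]; push_cast [Complex.normSq_eq_conj_mul_self]; simp [mul_assoc]
  have hQ0c : ((Q0 : ℝ) : ℂ) = ∑ i, ((θ i : ℝ) : ℂ) * ((starRingEnd ℂ) (x i) * x i) := by
    rw [hQ0]; push_cast [Complex.normSq_eq_conj_mul_self]; simp [mul_assoc]
  have hyc : ∀ i, (starRingEnd ℂ) (y i) = (starRingEnd ℂ) μ * (starRingEnd ℂ) (x i) :=
    fun i => by rw [e1 i]; simp
  have hpull : ∀ i, ∑ j, (starRingEnd ℂ) (x i) * ((L i j : ℝ) : ℂ) * x j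
      = (starRingEnd ℂ) (x i) * ∑ j, ((L i j : ℝ) : ℂ) * x j := by
    intro i
    rw [Finset.mul_sum]
    exact Finset.sum_congr rfl fun j _ => (mul_assoc _ _ _)
  have key : ∑ i, (starRingEnd ℂ) (y i) * ((↑(m i) : ℂ) * (μ * y i) + ↑(h i) * y i
        + ↑(θ i) * x i + (∑ j, (↑(L i j) : ℂ) * x j))
      = ∑ i, (starRingEnd ℂ) (y i) * (↑(φ i) * z i) :=
    Finset.sum_congr rfl fun i _ => by rw [e2 i]
  have hLHS : μ * (R : ℂ) + (Sh : ℂ) + (starRingEnd ℂ) μ * (Q0 : ℂ)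
        + (starRingEnd ℂ) μ * (QL : ℂ)
      = ∑ i, (starRingEnd ℂ) (y i) * ((↑(m i) : ℂ) * (μ * y i) + ↑(h i) * y i
        + ↑(θ i) * x i + (∑ j, (↑(L i j) : ℂ) * x j)) := by
    rw [hRc, hShc, hQ0c, ← hΛ, Finset.mul_sum, Finset.mul_sum, Finset.mul_sum,
      ← Finset.sum_add_distrib, ← Finset.sum_add_distrib, ← Finset.sum_add_distrib]
    refine Finset.sum_congr rfl fun i _ => ?_
    rw [hpull i, hyc i]
    ring
  have hRHS2 : ∑ i, (starRingEnd ℂ) (y i) * (↑(φ i) * z i) = c * (P : ℂ) := by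
    rw [hPc, Finset.mul_sum]
    refine Finset.sum_congr rfl fun i _ => ?_
    rw [hcz i]; ring
  have master : μ * (R : ℂ) + (Sh : ℂ) + (starRingEnd ℂ) μ * (Q0 : ℂ)
      + (starRingEnd ℂ) μ * (QL : ℂ) = c * (P : ℂ) := by
    rw [hLHS, key, hRHS2]
  have hrepart : μ.re * R + Sh + μ.re * Q0 + μ.re * QL = c.re * P := by
    have := congrArg Complex.re master
    simpa [Complex.add_re, Complex.mul_re, Complex.ofReal_re, Complex.ofReal_im,
      Complex.conj_re, Complex.conj_im] using this
  have hcP : c.re * P ≤ 0 := mul_nonpos_of_nonpos_of_nonneg hcre hP0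
  have hSh0 : Sh = 0 := by
    have h1 : 0 ≤ μ.re * R := mul_nonneg hcon hR0
    have h2 : 0 ≤ μ.re * Q0 := mul_nonneg hcon hQ00
    have h3 : 0 ≤ μ.re * QL := mul_nonneg hcon hQL0
    linarith
  have hy0 : ∀ i, y i = 0 := by
    intro i
    have hsum0 : ∑ i, h i * Complex.normSq (y i) = 0 := by rw [← hSh]; exact hSh0
    have hall := (Finset.sum_eq_zero_iff_of_nonneg
      (fun j _ => mul_nonneg (hh j).le (Complex.normSq_nonneg _))).1 hsum0
    have := hall i (Finset.mem_univ i)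
    rcases mul_eq_zero.1 this with hc' | hc'
    · exact absurd hc' (hh i).ne'
    · exact Complex.normSq_eq_zero.1 hc'
  have hz0 : ∀ i, z i = 0 := fun i => by rw [hcz i, hy0 i, mul_zero]
  have e2' : ∀ i, (↑(θ i) : ℂ) * x i + (∑ j, (↑(L i j) : ℂ) * x j) = 0 := by
    intro i
    have := e2 i
    rw [hy0 i, hz0 i] at this
    linear_combination this
  have hQsum : Q0 + QL = 0 := by
    have hc0 : ∑ i, (starRingEnd ℂ) (x i) * ((↑(θ i) : ℂ) * x i + ∑ j, (↑(L i j) : ℂ) * x j) = 0 :=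
      Finset.sum_eq_zero fun i _ => by rw [e2' i, mul_zero]
    have hce : ((Q0 : ℝ) : ℂ) + ((QL : ℝ) : ℂ)
        = ∑ i, (starRingEnd ℂ) (x i) * ((↑(θ i) : ℂ) * x i + ∑ j, (↑(L i j) : ℂ) * x j) := by
      rw [hQ0c, ← hΛ, ← Finset.sum_add_distrib]
      refine Finset.sum_congr rfl fun i _ => ?_
      rw [hpull i]
      ring
    have hfin : ((Q0 + QL : ℝ) : ℂ) = 0 := by push_cast; rw [hce]; exact hc0
    exact_mod_cast hfin
  have hQ0z : Q0 = 0 := by linarith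
  have hx0 : ∀ i, x i = 0 := by
    intro i
    have hsum0 : ∑ i, θ i * Complex.normSq (x i) = 0 := by rw [← hQ0]; exact hQ0z
    have hall := (Finset.sum_eq_zero_iff_of_nonneg
      (fun j _ => mul_nonneg (hθ j).le (Complex.normSq_nonneg _))).1 hsum0
    have := hall i (Finset.mem_univ i)
    rcases mul_eq_zero.1 this with hc' | hc'
    · exact absurd hc' (hθ i).ne'
    · exact Complex.normSq_eq_zero.1 hc'
  apply hv0
  funext k
  simp only [Pi.zero_apply]
  rcases k with i | (i | i)
  · exact hx0 i
  · exact hy0 i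
  · exact hz0 i
end

section
/- Let σ satisfy 0 < σ < min{min_i (h_i/m_i), 4 min_i θ_i / (κ_D max_i φ_i)} where m_i, h_i, θ_i, φ_i > 0 and κ_D, τ > 0. Then the block matrix P̄ = [[M⁻¹(L+Θ+σH), σI, 0], [σI, I, 0], [0, 0, κ_D⁻¹τM⁻¹Φ]] is symmetric positive definite, where L is a symmetric positive semidefinite matrix (Laplacian of a connected undirected graph) and M, H, Θ, Φ are the diagonal matrices diag(m_i), diag(h_i), diag(θ_i), diag(φ_i), assuming M = I (so that M⁻¹(L+Θ+σH) is symmetric). -/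
open Matrix

lemma blk3_conjTranspose {N : ℕ} (A B C D E F G H I : Matrix (Fin N) (Fin N) ℝ) :
    (blk3 A B C D E F G H I)ᴴ = blk3 Aᴴ Dᴴ Gᴴ Bᴴ Eᴴ Hᴴ Cᴴ Fᴴ Iᴴ := by
  ext i j
  rcases i with i | i | i <;> rcases j with j | j | j <;> rfl

lemma blk3_quad {N : ℕ} (A B C D E F G H I : Matrix (Fin N) (Fin N) ℝ)
    (v : (Fin N ⊕ (Fin N ⊕ Fin N)) → ℝ) :
    v ⬝ᵥ (blk3 A B C D E F G H I) *ᵥ v =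
      (fun i => v (.inl i)) ⬝ᵥ A *ᵥ (fun i => v (.inl i))
      + (fun i => v (.inl i)) ⬝ᵥ B *ᵥ (fun i => v (.inr (.inl i)))
      + (fun i => v (.inl i)) ⬝ᵥ C *ᵥ (fun i => v (.inr (.inr i)))
      + (fun i => v (.inr (.inl i))) ⬝ᵥ D *ᵥ (fun i => v (.inl i))
      + (fun i => v (.inr (.inl i))) ⬝ᵥ E *ᵥ (fun i => v (.inr (.inl i)))
      + (fun i => v (.inr (.inl i))) ⬝ᵥ F *ᵥ (fun i => v (.inr (.inr i)))
      + (fun i => v (.inr (.inr i))) ⬝ᵥ G *ᵥ (fun i => v (.inl i))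
      + (fun i => v (.inr (.inr i))) ⬝ᵥ H *ᵥ (fun i => v (.inr (.inl i)))
      + (fun i => v (.inr (.inr i))) ⬝ᵥ I *ᵥ (fun i => v (.inr (.inr i))) := by
  simp only [dotProduct, mulVec, Fintype.sum_sum_type, blk3, Matrix.of_apply,
    Finset.sum_add_distrib, mul_add]
  ring


/-- With `M = I` and `0 < σ < min{min_i h_i/m_i, 4 min_i θ_i/(κ_D max_i φ_i)}`
(here `m_i = 1`), the block matrix
`P̄ = [[L+Θ+σH, σI, 0], [σI, I, 0], [0, 0, κ_D⁻¹τΦ]]` is symmetric positive definite,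
where `L` is symmetric positive semidefinite (a connected-graph Laplacian). -/
theorem stmt5 {N : ℕ} (L : Matrix (Fin N) (Fin N) ℝ)
    (hL : L.PosSemidef)
    (θ h φ : Fin N → ℝ)
    (hθ : ∀ i, 0 < θ i) (hh : ∀ i, 0 < h i) (hφ : ∀ i, 0 < φ i)
    (κ τ σ : ℝ) (hκ : 0 < κ) (hτ : 0 < τ)
    (hσ0 : 0 < σ) (hσ1 : ∀ i, σ < h i / 1) (hσ2 : ∀ i j, σ < 4 * θ i / (κ * φ j)) :
    (blk3 (L + Matrix.diagonal θ + σ • Matrix.diagonal h) (σ • 1) 0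
      (σ • 1) 1 0
      0 0 ((κ⁻¹ * τ) • Matrix.diagonal φ)).PosDef := by
  refine Matrix.posDef_iff_dotProduct_mulVec.mpr ⟨?_, ?_⟩
  · -- IsHermitian
    have hLt : Lᵀ = L := by
      ext i j
      exact hL.isHermitian.apply i j
    rw [Matrix.IsHermitian, blk3_conjTranspose]
    simp [Matrix.conjTranspose_smul, Matrix.conjTranspose_add, Matrix.diagonal_conjTranspose,
      hL.isHermitian.eq, hLt]
  · intro v hv
    set x : Fin N → ℝ := fun i => v (.inl i) with hxd
    set y : Fin N → ℝ := fun i => v (.inr (.inl i)) with hyd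
    set z : Fin N → ℝ := fun i => v (.inr (.inr i)) with hzd
    have hx : ∀ i, v (.inl i) = x i := fun _ => rfl
    have hy : ∀ i, v (.inr (.inl i)) = y i := fun _ => rfl
    have hz : ∀ i, v (.inr (.inr i)) = z i := fun _ => rfl
    have hstar : (star v : (Fin N ⊕ (Fin N ⊕ Fin N)) → ℝ) = v :=
      funext fun i => star_trivial _
    have key : (star v) ⬝ᵥ (blk3 (L + Matrix.diagonal θ + σ • Matrix.diagonal h) (σ • 1) 0
      (σ • 1) 1 0 0 0 ((κ⁻¹ * τ) • Matrix.diagonal φ)) *ᵥ v =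
        x ⬝ᵥ L *ᵥ x + ∑ i, (θ i * x i ^ 2 + (σ * h i - σ ^ 2) * x i ^ 2
          + (σ * x i + y i) ^ 2 + κ⁻¹ * τ * (φ i * z i ^ 2)) := by
      rw [hstar, blk3_quad]
      simp only [dotProduct, mulVec, Matrix.add_apply,
        Matrix.smul_apply, Matrix.diagonal_apply, Matrix.one_apply, Matrix.zero_apply,
        smul_eq_mul, mul_ite, mul_zero, ite_mul, zero_mul, Finset.sum_ite_eq,
        Finset.mem_univ, if_true, Finset.sum_add_distrib, mul_add, add_mul,
        Finset.sum_const_zero, hx, hy, hz]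
      simp only [add_zero, zero_add, ← Finset.sum_add_distrib]
      exact Finset.sum_congr rfl fun i _ => by ring
    rw [key]
    have hxLx : (0:ℝ) ≤ x ⬝ᵥ L *ᵥ x := by simpa using hL.dotProduct_mulVec_nonneg x
    set f : Fin N → ℝ := fun i => θ i * x i ^ 2 + (σ * h i - σ ^ 2) * x i ^ 2
          + (σ * x i + y i) ^ 2 + κ⁻¹ * τ * (φ i * z i ^ 2) with hf
    have hσh : ∀ i, 0 ≤ σ * h i - σ ^ 2 := by
      intro i
      have := hσ1 i
      rw [div_one] at this
      nlinarith
    have hsq : ∀ w : ℝ, w ≠ 0 → (0:ℝ) < w ^ 2 := fun w hw =>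
      (sq_nonneg w).lt_of_ne (Ne.symm (pow_ne_zero 2 hw))
    have hκτ : (0:ℝ) ≤ κ⁻¹ * τ := mul_nonneg (inv_nonneg.2 hκ.le) hτ.le
    have hfnonneg : ∀ i, 0 ≤ f i := by
      intro i
      have h1 : (0:ℝ) ≤ θ i * x i ^ 2 := mul_nonneg (hθ i).le (sq_nonneg _)
      have h2 : (0:ℝ) ≤ (σ * h i - σ ^ 2) * x i ^ 2 :=
        mul_nonneg (hσh i) (sq_nonneg _)
      have h3 : (0:ℝ) ≤ (σ * x i + y i) ^ 2 := sq_nonneg _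
      have h4 : (0:ℝ) ≤ κ⁻¹ * τ * (φ i * z i ^ 2) :=
        mul_nonneg hκτ (mul_nonneg (hφ i).le (sq_nonneg _))
      simp only [hf]; linarith
    have hex : ∃ i, 0 < f i := by
      have : ∃ idx, v idx ≠ 0 := by
        by_contra hc
        push_neg at hc
        exact hv (funext fun i => hc i)
      obtain ⟨idx, hidx⟩ := this
      rcases idx with i | i | i
      · refine ⟨i, ?_⟩
        have h1 : (0:ℝ) < θ i * x i ^ 2 := mul_pos (hθ i) (hsq _ hidx)
        have h2 := mul_nonneg (hσh i) (sq_nonneg (x i))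
        have h3 := sq_nonneg (σ * x i + y i)
        have h4 : (0:ℝ) ≤ κ⁻¹ * τ * (φ i * z i ^ 2) :=
          mul_nonneg hκτ (mul_nonneg (hφ i).le (sq_nonneg _))
        simp only [hf]; linarith
      · refine ⟨i, ?_⟩
        by_cases hxi : x i = 0
        · have h3 : (0:ℝ) < (σ * x i + y i) ^ 2 := by
            apply hsq; rw [hxi]; simpa using hidx
          have h1 : (0:ℝ) ≤ θ i * x i ^ 2 := mul_nonneg (hθ i).le (sq_nonneg _)
          have h2 := mul_nonneg (hσh i) (sq_nonneg (x i))
          have h4 : (0:ℝ) ≤ κ⁻¹ * τ * (φ i * z i ^ 2) :=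
            mul_nonneg hκτ (mul_nonneg (hφ i).le (sq_nonneg _))
          simp only [hf]; linarith
        · have h1 : (0:ℝ) < θ i * x i ^ 2 := mul_pos (hθ i) (hsq _ hxi)
          have h2 := mul_nonneg (hσh i) (sq_nonneg (x i))
          have h3 := sq_nonneg (σ * x i + y i)
          have h4 : (0:ℝ) ≤ κ⁻¹ * τ * (φ i * z i ^ 2) :=
            mul_nonneg hκτ (mul_nonneg (hφ i).le (sq_nonneg _))
          simp only [hf]; linarith
      · refine ⟨i, ?_⟩
        have h4 : (0:ℝ) < κ⁻¹ * τ * (φ i * z i ^ 2) :=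
          mul_pos (mul_pos (inv_pos.2 hκ) hτ) (mul_pos (hφ i) (hsq _ hidx))
        have h1 : (0:ℝ) ≤ θ i * x i ^ 2 := mul_nonneg (hθ i).le (sq_nonneg _)
        have h2 := mul_nonneg (hσh i) (sq_nonneg (x i))
        have h3 := sq_nonneg (σ * x i + y i)
        simp only [hf]; linarith
    obtain ⟨i0, hi0⟩ := hex
    have hsum : 0 < ∑ i, f i :=
      Finset.sum_pos' (fun i _ => hfnonneg i) ⟨i0, Finset.mem_univ _, hi0⟩
    exact add_pos_of_nonneg_of_pos hxLx hsum
end
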